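/- For all integers n ≥ 1, t ≥ 0 and x with 0 ≤ x ≤ n, the probability that the simple random walk on ℤ started at x does not hit {0, n} up to time t is h_n(x,t) = (2/n) Σ_{j=1}^{⌊n/2⌋} cos^t( π(2j−1)/n ) · cot( π(2j−1)/(2n) ) · sin( πx(2j−1)/n ). -/

import Mathlib

open MeasureTheory ProbabilityTheory Finset Filter
open scoped ENNReal Topology

/-- One step transition probability of the simple random walk on `ℤ`. -/
noncomputable def srwStep (u v : ℤ) : ℝ≥0∞ :=
  if v = u + 1 ∨ v = u - 1 then (1 : ℝ≥0∞) / 2 else 0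

/-- `P x` is the law of the simple random walk `S` on `ℤ` started at `x`:
for every finite path `γ` with `γ 0 = x`, the probability of following `γ`
during the first `t` steps is the product of the one-step transition
probabilities. -/
def IsSRW {Ω : Type*} [MeasurableSpace Ω] (P : ℤ → Measure Ω) (S : ℕ → Ω → ℤ) : Prop :=
  (∀ x, IsProbabilityMeasure (P x)) ∧ (∀ t, Measurable (S t)) ∧
    ∀ (x : ℤ) (t : ℕ) (γ : ℕ → ℤ), γ 0 = x →
      P x {ω | ∀ s ≤ t, S s ω = γ s} = ∏ s ∈ Finset.range t, srwStep (γ s) (γ (s + 1))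

section SRWAux
open Finset Real

lemma cos_sum_zero (n : ℕ) (hn : 1 ≤ n) (m : ℤ) (hm : ¬ (n:ℤ) ∣ m) :
    ∑ j ∈ Finset.range n, Real.cos ((m:ℝ) * (Real.pi * (2*(j:ℝ)+1) / n)) = 0 := by
  have hn0 : (n:ℝ) ≠ 0 := Nat.cast_ne_zero.mpr (by omega)
  have hn0' : (n:ℂ) ≠ 0 := Nat.cast_ne_zero.mpr (by omega)
  have hpi : (Real.pi : ℂ) ≠ 0 := Complex.ofReal_ne_zero.mpr Real.pi_ne_zero
  have hI : (Complex.I : ℂ) ≠ 0 := Complex.I_ne_zero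
  set z : ℂ := Complex.exp ((2 * Real.pi * m / n : ℝ) * Complex.I) with hz
  have hz1 : z ≠ 1 := by
    intro h
    rw [hz, Complex.exp_eq_one_iff] at h
    obtain ⟨k, hk⟩ := h
    push_cast at hk
    field_simp at hk
    have hmk : (m:ℂ) = (k:ℂ) * n := by
      have h2 : (2*(Real.pi:ℂ)*Complex.I) ≠ 0 := by simp [hpi, Complex.I_ne_zero]
      apply mul_left_cancel₀ h2
      linear_combination (2*(Real.pi:ℂ)*Complex.I) * hk
    have : m = k * n := by exact_mod_cast hmk
    exact hm ⟨k, by linarith [this]⟩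
  have hzn : z ^ n = 1 := by
    rw [hz, ← Complex.exp_nat_mul]
    rw [show (n:ℂ) * (((2 * Real.pi * m / n : ℝ):ℂ) * Complex.I) = (m:ℂ) * (2 * (Real.pi:ℂ) * Complex.I) by push_cast; field_simp]
    exact Complex.exp_int_mul_two_pi_mul_I m
  have key : ∑ j ∈ Finset.range n, Complex.exp (((m:ℝ) * (Real.pi * (2*(j:ℝ)+1) / n) : ℝ) * Complex.I) = 0 := by
    have : ∀ j ∈ Finset.range n, Complex.exp (((m:ℝ) * (Real.pi * (2*(j:ℝ)+1) / n) : ℝ) * Complex.I)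
        = Complex.exp (((Real.pi * m / n : ℝ):ℂ) * Complex.I) * z ^ j := by
      intro j _
      rw [hz, ← Complex.exp_nat_mul, ← Complex.exp_add]
      congr 1
      push_cast
      field_simp
      ring
    rw [Finset.sum_congr rfl this, ← Finset.mul_sum, geom_sum_eq hz1, hzn]
    simp
  have := congrArg Complex.re key
  rw [Complex.re_sum] at this
  simp only [Complex.exp_ofReal_mul_I_re] at this
  exact this

noncomputable def rwth (n k : ℕ) : ℝ := Real.pi * (2*(k:ℝ)+1) / n

lemma cos_n_theta (n k : ℕ) (hn : 1 ≤ n) : Real.cos ((n:ℝ) * rwth n k) = -1 := by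
  have hn0 : (n:ℝ) ≠ 0 := Nat.cast_ne_zero.mpr (by omega)
  have : (n:ℝ) * rwth n k = (((k+1:ℕ):ℤ):ℝ) * (2*Real.pi) - Real.pi := by
    unfold rwth; push_cast; field_simp; ring
  rw [this, Real.cos_int_mul_two_pi_sub, Real.cos_pi]

lemma sin_mul_sin (a b : ℝ) : Real.sin a * Real.sin b
    = (Real.cos (a - b) - Real.cos (a + b)) / 2 := by
  rw [Real.cos_sub, Real.cos_add]; ring

lemma orth (n : ℕ) (hn : 1 ≤ n) (x y : ℤ) (hx1 : 1 ≤ x) (hx2 : x ≤ (n:ℤ) - 1)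
    (hy1 : 1 ≤ y) (hy2 : y ≤ (n:ℤ) - 1) :
    ∑ k ∈ Finset.range n, Real.sin ((x:ℝ) * rwth n k) * Real.sin ((y:ℝ) * rwth n k)
    = (if x = y then (n:ℝ)/2 else 0) + (if x + y = (n:ℤ) then (n:ℝ)/2 else 0) := by
  have h1 : ∀ k, Real.sin ((x:ℝ) * rwth n k) * Real.sin ((y:ℝ) * rwth n k)
      = (Real.cos (((x - y : ℤ):ℝ) * rwth n k) - Real.cos (((x + y : ℤ):ℝ) * rwth n k)) / 2 := by
    intro k
    rw [sin_mul_sin]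
    push_cast
    ring_nf
  simp only [h1]
  rw [← Finset.sum_div, Finset.sum_sub_distrib]
  have hA : ∑ k ∈ Finset.range n, Real.cos (((x - y : ℤ):ℝ) * rwth n k)
      = if x = y then (n:ℝ) else 0 := by
    by_cases h : x = y
    · simp [h]
    · rw [if_neg h]
      have := cos_sum_zero n hn (x - y) (by
        intro hd
        have := Int.eq_zero_of_dvd_of_natAbs_lt_natAbs hd (by omega)
        omega)
      simpa [rwth] using this
  have hB : ∑ k ∈ Finset.range n, Real.cos (((x + y : ℤ):ℝ) * rwth n k)
      = if x + y = (n:ℤ) then -(n:ℝ) else 0 := by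
    by_cases h : x + y = (n:ℤ)
    · rw [if_pos h]
      have : ∀ k ∈ Finset.range n, Real.cos (((x + y : ℤ):ℝ) * rwth n k) = -1 := by
        intro k _
        rw [h]; push_cast; exact cos_n_theta n k hn
      rw [Finset.sum_congr rfl this]
      simp
    · rw [if_neg h]
      have := cos_sum_zero n hn (x + y) (by
        intro hd
        have hd2 : (n:ℤ) ∣ (x + y - n) := (dvd_sub_right hd).mpr dvd_rfl
        have := Int.eq_zero_of_dvd_of_natAbs_lt_natAbs hd2 (by omega)
        omega)
      simpa [rwth] using this
  rw [hA, hB]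
  split_ifs <;> ring

lemma sin_reflect (n : ℕ) (hn : 1 ≤ n) (x : ℤ) (k : ℕ) (hk : k < n) :
    Real.sin ((x:ℝ) * rwth n (n - 1 - k)) = - Real.sin ((x:ℝ) * rwth n k) := by
  have hn0 : (n:ℝ) ≠ 0 := Nat.cast_ne_zero.mpr (by omega)
  have harg : (x:ℝ) * rwth n (n - 1 - k) = (x:ℝ) * (2*Real.pi) - (x:ℝ) * rwth n k := by
    unfold rwth
    have : ((n - 1 - k : ℕ) : ℝ) = (n:ℝ) - 1 - k := by
      have : (n - 1 - k : ℕ) = n - (1 + k) := by omega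
      rw [this]
      push_cast [Nat.cast_sub (by omega : 1 + k ≤ n)]
      ring
    rw [this]
    field_simp
    ring
  rw [harg, Real.sin_sub]
  have h1 : Real.sin ((x:ℝ) * (2*Real.pi)) = 0 := by
    have : (x:ℝ) * (2*Real.pi) = ((2*x : ℤ):ℝ) * Real.pi := by push_cast; ring
    rw [this, Real.sin_int_mul_pi]
  have h2 : Real.cos ((x:ℝ) * (2*Real.pi)) = 1 := by
    have : (x:ℝ) * (2*Real.pi) = ((x : ℤ):ℝ) * (2*Real.pi) := by push_cast; ring
    rw [this, Real.cos_int_mul_two_pi]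
  rw [h1, h2]
  ring

lemma sin_mid (n : ℕ) (hodd : n % 2 = 1) (x : ℤ) :
    Real.sin ((x:ℝ) * rwth n (n/2)) = 0 := by
  have hn0 : (n:ℝ) ≠ 0 := Nat.cast_ne_zero.mpr (by omega)
  have : (x:ℝ) * rwth n (n/2) = (x:ℝ) * Real.pi := by
    unfold rwth
    have h2 : (2*((n/2 : ℕ):ℝ)+1) = (n:ℝ) := by
      have : 2 * (n/2) + 1 = n := by omega
      exact_mod_cast this
    rw [h2]
    field_simp
  rw [this]
  exact_mod_cast Real.sin_int_mul_pi x

lemma half_range (n : ℕ) (hn : 1 ≤ n) (x y : ℤ) :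
    ∑ k ∈ Finset.range n, Real.sin ((x:ℝ) * rwth n k) * Real.sin ((y:ℝ) * rwth n k)
    = 2 * ∑ k ∈ Finset.range (n/2), Real.sin ((x:ℝ) * rwth n k) * Real.sin ((y:ℝ) * rwth n k) := by
  set F : ℕ → ℝ := fun k => Real.sin ((x:ℝ) * rwth n k) * Real.sin ((y:ℝ) * rwth n k) with hF
  have hsecond : ∑ k ∈ Finset.Ico (n/2) n, F k = ∑ k ∈ Finset.range (n - n/2), F k := by
    apply Finset.sum_nbij' (fun k => n - 1 - k) (fun k => n - 1 - k)
    · intro a ha; simp at ha ⊢; omega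
    · intro a ha; simp at ha ⊢; omega
    · intro a ha; simp at ha; omega
    · intro a ha; simp at ha; omega
    · intro a ha
      simp only [Finset.mem_Ico] at ha
      have h1 := sin_reflect n hn x a ha.2
      have h2 := sin_reflect n hn y a ha.2
      simp only [hF]
      rw [h1, h2]
      ring
  have hsplit : ∑ k ∈ Finset.range n, F k
      = ∑ k ∈ Finset.range (n/2), F k + ∑ k ∈ Finset.Ico (n/2) n, F k := by
    rw [Finset.range_eq_Ico, ← Finset.sum_Ico_consecutive F (Nat.zero_le _) (Nat.div_le_self n 2), ← Finset.range_eq_Ico]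
  rw [hsplit, hsecond]
  rcases Nat.even_or_odd n with he | ho
  · have he' := Nat.even_iff.mp he
    have : n - n/2 = n/2 := by omega
    rw [this]; ring
  · have ho' := Nat.odd_iff.mp ho
    have h1 : n - n/2 = n/2 + 1 := by omega
    rw [h1, Finset.sum_range_succ]
    have : F (n/2) = 0 := by
      simp only [hF]
      rw [sin_mid n (by omega) x]
      ring
    rw [this]
    ring

lemma cot_eq_sum (n : ℕ) (hn : 1 ≤ n) (k : ℕ) (hk : k < n/2) :
    Real.cot (rwth n k / 2)
      = ∑ i ∈ Finset.range (n-1), Real.sin (((i:ℝ)+1) * rwth n k) := by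
  have hn0 : (0:ℝ) < (n:ℝ) := by exact_mod_cast Nat.pos_of_ne_zero (by omega)
  have hθpos : 0 < rwth n k := by
    unfold rwth
    apply div_pos (by positivity) hn0
  have hθlt : rwth n k < Real.pi := by
    unfold rwth
    rw [div_lt_iff₀ hn0]
    have h2 : (2*(k:ℝ)+1) < (n:ℝ) := by
      have : 2*k+1 < n := by omega
      exact_mod_cast this
    nlinarith [Real.pi_pos]
  have hsin : 0 < Real.sin (rwth n k / 2) := by
    apply Real.sin_pos_of_pos_of_lt_pi (by linarith) (by linarith [Real.pi_pos])
  set θ := rwth n k with hθ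
  set f : ℕ → ℝ := fun i => Real.cos (((i:ℝ) + 1/2) * θ) with hf
  have htel := Finset.sum_range_sub' f (n-1)
  have hterm : ∀ i, f i - f (i+1) = 2 * Real.sin (((i:ℝ)+1) * θ) * Real.sin (θ/2) := by
    intro i
    simp only [hf]
    rw [Real.cos_sub_cos]
    push_cast
    have e1 : ((i:ℝ) + 1/2) * θ / 2 + ((i:ℝ) + 1 + 1/2) * θ / 2 = ((i:ℝ)+1)*θ := by ring
    have e2 : (((i:ℝ) + 1/2) * θ - ((i:ℝ) + 1 + 1/2) * θ) / 2 = -(θ/2) := by ring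
    rw [show (((i:ℝ) + 1/2) * θ + ((i:ℝ) + 1 + 1/2) * θ)/2 = ((i:ℝ)+1)*θ by ring,
       e2, Real.sin_neg]
    ring
  have hf0 : f 0 = Real.cos (θ/2) := by
    simp only [hf]; norm_num; rw [show 1/2*θ = θ/2 by ring]
  have hflast : f (n-1) = - Real.cos (θ/2) := by
    simp only [hf]
    have e : (((n-1:ℕ):ℝ) + 1/2) * θ = (((k+1:ℕ):ℤ):ℝ) * (2*Real.pi) - (Real.pi + θ/2) := by
      rw [Nat.cast_sub (by omega : 1 ≤ n)]
      push_cast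
      rw [hθ]
      unfold rwth
      field_simp
      ring
    rw [e, Real.cos_int_mul_two_pi_sub]
    rw [show Real.pi + θ/2 = Real.pi - (-(θ/2)) by ring, Real.cos_pi_sub, Real.cos_neg]
  have hsum : (∑ i ∈ Finset.range (n-1), Real.sin (((i:ℝ)+1) * θ)) * (2 * Real.sin (θ/2))
      = 2 * Real.cos (θ/2) := by
    rw [Finset.sum_mul]
    have : ∀ i ∈ Finset.range (n-1), Real.sin (((i:ℝ)+1) * θ) * (2 * Real.sin (θ/2)) = f i - f (i+1) := by
      intro i _
      rw [hterm i]; ring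
    rw [Finset.sum_congr rfl this, htel, hf0, hflast]
    ring
  rw [Real.cot_eq_cos_div_sin]
  field_simp
  have e : ∑ x ∈ Finset.range (n-1), Real.sin (θ * ((x:ℝ)+1)) = ∑ i ∈ Finset.range (n-1), Real.sin (((i:ℝ)+1) * θ) := Finset.sum_congr rfl (fun i _ => by ring_nf)
  rw [e]
  linarith [hsum]

noncomputable def srwF (n : ℕ) (x : ℤ) (t : ℕ) : ℝ :=
  (2 / (n : ℝ)) * ∑ j ∈ Finset.Icc 1 (n / 2),
    Real.cos (Real.pi * (2 * (j : ℝ) - 1) / n) ^ t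
      * Real.cot (Real.pi * (2 * (j : ℝ) - 1) / (2 * n))
      * Real.sin (Real.pi * (x : ℝ) * (2 * (j : ℝ) - 1) / n)

lemma srwF_eq (n : ℕ) (x : ℤ) (t : ℕ) :
    srwF n x t = (2 / (n:ℝ)) * ∑ k ∈ Finset.range (n/2),
      Real.cos (rwth n k) ^ t * Real.cot (rwth n k / 2) * Real.sin ((x:ℝ) * rwth n k) := by
  unfold srwF
  congr 1
  rw [Finset.sum_bij (fun (j : ℕ) (_ : j ∈ Finset.Icc 1 (n/2)) => j - 1)]
  · intro a ha; simp at ha ⊢; omega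
  · intro a ha b hb hab; simp at ha hb; omega
  · intro b hb; simp at hb; exact ⟨b+1, by simp; omega, by omega⟩
  · intro a ha
    simp only [Finset.mem_Icc] at ha
    have hc : ((a - 1 : ℕ):ℝ) = (a:ℝ) - 1 := by
      rw [Nat.cast_sub (by omega : 1 ≤ a)]; norm_num
    unfold rwth
    rw [hc]
    congr 3
    · ring_nf
    · rw [show Real.pi * (2*(a:ℝ)-1)/(2*n) = Real.pi * (2*((a:ℝ)-1)+1)/n/2 by ring]
    · rw [show Real.pi * (x:ℝ) * (2*(a:ℝ)-1)/n = (x:ℝ) * (Real.pi * (2*((a:ℝ)-1)+1)/n) by ring]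

lemma srwF_zero (n : ℕ) (t : ℕ) : srwF n 0 t = 0 := by
  unfold srwF
  have : ∀ j ∈ Finset.Icc 1 (n/2), Real.cos (Real.pi * (2*(j:ℝ)-1)/n) ^ t
      * Real.cot (Real.pi * (2*(j:ℝ)-1)/(2*n)) * Real.sin (Real.pi * ((0:ℤ):ℝ) * (2*(j:ℝ)-1)/n) = 0 := by
    intro j _
    rw [show Real.pi * ((0:ℤ):ℝ) * (2*(j:ℝ)-1)/n = 0 by push_cast; ring, Real.sin_zero]
    ring
  rw [Finset.sum_congr rfl this]
  simp

lemma srwF_n (n : ℕ) (hn : 1 ≤ n) (t : ℕ) : srwF n n t = 0 := by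
  unfold srwF
  have hn0 : (n:ℝ) ≠ 0 := Nat.cast_ne_zero.mpr (by omega)
  have : ∀ j ∈ Finset.Icc 1 (n/2), Real.cos (Real.pi * (2*(j:ℝ)-1)/n) ^ t
      * Real.cot (Real.pi * (2*(j:ℝ)-1)/(2*n)) * Real.sin (Real.pi * (((n:ℤ)):ℝ) * (2*(j:ℝ)-1)/n) = 0 := by
    intro j hj
    simp only [Finset.mem_Icc] at hj
    have : Real.pi * (((n:ℤ)):ℝ) * (2*(j:ℝ)-1)/n = ((2*(j:ℤ)-1 : ℤ):ℝ) * Real.pi := by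
      push_cast; field_simp
    rw [this, Real.sin_int_mul_pi]
    ring
  rw [Finset.sum_congr rfl this]
  simp

lemma srwF_rec (n : ℕ) (hn : 1 ≤ n) (x : ℤ) (t : ℕ) :
    srwF n x (t+1) = (srwF n (x-1) t + srwF n (x+1) t) / 2 := by
  rw [srwF_eq, srwF_eq, srwF_eq]
  rw [eq_div_iff (by norm_num : (2:ℝ) ≠ 0)]
  rw [Finset.mul_sum, Finset.mul_sum, Finset.mul_sum, Finset.sum_mul, ← Finset.sum_add_distrib]
  apply Finset.sum_congr rfl
  intro k _
  have hsinsum : Real.sin ((((x-1:ℤ)):ℝ) * rwth n k) + Real.sin ((((x+1:ℤ)):ℝ) * rwth n k)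
      = 2 * Real.sin ((x:ℝ) * rwth n k) * Real.cos (rwth n k) := by
    have e1 : (((x-1:ℤ)):ℝ) * rwth n k = (x:ℝ) * rwth n k - rwth n k := by push_cast; ring
    have e2 : (((x+1:ℤ)):ℝ) * rwth n k = (x:ℝ) * rwth n k + rwth n k := by push_cast; ring
    rw [e1, e2, Real.sin_sub, Real.sin_add]
    ring
  have hpow : Real.cos (rwth n k) ^ (t+1) = Real.cos (rwth n k) ^ t * Real.cos (rwth n k) := by
    ring
  rw [hpow]
  linear_combination (-(2/(n:ℝ))) * Real.cos (rwth n k) ^ t * Real.cot (rwth n k / 2) * hsinsum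

lemma srwF_base (n : ℕ) (hn : 1 ≤ n) (x : ℤ) (hx1 : 1 ≤ x) (hx2 : x ≤ (n:ℤ)-1) :
    srwF n x 0 = 1 := by
  have hn2 : 2 ≤ n := by omega
  have hn0 : (n:ℝ) ≠ 0 := Nat.cast_ne_zero.mpr (by omega)
  rw [srwF_eq]
  have step1 : ∀ k ∈ Finset.range (n/2),
      Real.cos (rwth n k)^0 * Real.cot (rwth n k / 2) * Real.sin ((x:ℝ) * rwth n k)
      = ∑ i ∈ Finset.range (n-1),
          Real.sin ((x:ℝ) * rwth n k) * Real.sin (((((i:ℕ)+1:ℕ):ℤ):ℝ) * rwth n k) := by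
    intro k hk
    rw [Finset.mem_range] at hk
    rw [pow_zero, one_mul, cot_eq_sum n hn k hk, Finset.sum_mul]
    apply Finset.sum_congr rfl
    intro i _
    push_cast
    ring
  rw [Finset.sum_congr rfl step1, Finset.sum_comm]
  have step3 : ∀ i ∈ Finset.range (n-1),
      ∑ k ∈ Finset.range (n/2), Real.sin ((x:ℝ) * rwth n k) * Real.sin (((((i:ℕ)+1:ℕ):ℤ):ℝ) * rwth n k)
      = ((if x = (((i:ℕ)+1:ℕ):ℤ) then (n:ℝ)/2 else 0)
          + (if x + (((i:ℕ)+1:ℕ):ℤ) = (n:ℤ) then (n:ℝ)/2 else 0)) / 2 := by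
    intro i hi
    rw [Finset.mem_range] at hi
    have hhalf := half_range n hn x (((i:ℕ)+1:ℕ):ℤ)
    have horth := orth n hn x (((i:ℕ)+1:ℕ):ℤ) hx1 hx2 (by push_cast; omega) (by push_cast; omega)
    rw [hhalf] at horth
    linarith
  rw [Finset.sum_congr rfl step3]
  have hsplit : ∑ i ∈ Finset.range (n-1),
      ((if x = (((i:ℕ)+1:ℕ):ℤ) then (n:ℝ)/2 else 0)
        + (if x + (((i:ℕ)+1:ℕ):ℤ) = (n:ℤ) then (n:ℝ)/2 else 0)) / 2
      = ((∑ i ∈ Finset.range (n-1), if x = (((i:ℕ)+1:ℕ):ℤ) then (n:ℝ)/2 else 0)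
        + (∑ i ∈ Finset.range (n-1), if x + (((i:ℕ)+1:ℕ):ℤ) = (n:ℤ) then (n:ℝ)/2 else 0)) / 2 := by
    rw [← Finset.sum_div, Finset.sum_add_distrib]
  rw [hsplit]
  have s1 : (∑ i ∈ Finset.range (n-1), if x = (((i:ℕ)+1:ℕ):ℤ) then (n:ℝ)/2 else 0) = (n:ℝ)/2 := by
    rw [Finset.sum_eq_single_of_mem ((x-1).toNat)]
    · rw [if_pos (by omega)]
    · rw [Finset.mem_range]; omega
    · intro b _ hb
      rw [if_neg (by omega)]
  have s2 : (∑ i ∈ Finset.range (n-1), if x + (((i:ℕ)+1:ℕ):ℤ) = (n:ℤ) then (n:ℝ)/2 else 0) = (n:ℝ)/2 := by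
    rw [Finset.sum_eq_single_of_mem (((n:ℤ)-1-x).toNat)]
    · rw [if_pos (by omega)]
    · rw [Finset.mem_range]; omega
    · intro b _ hb
      rw [if_neg (by omega)]
  rw [s1, s2]
  field_simp
  norm_num

def walkPath (x : ℤ) (ε : ℕ → Bool) : ℕ → ℤ
  | 0 => x
  | (s+1) => walkPath x ε s + (if ε s then 1 else -1)

def extb (t : ℕ) (ε : Fin t → Bool) : ℕ → Bool := fun i => if h : i < t then ε ⟨i, h⟩ else false

lemma walkPath_succ (x : ℤ) (ε : ℕ → Bool) (s : ℕ) :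
    walkPath x ε (s+1) = walkPath x ε s + (if ε s then 1 else -1) := rfl

lemma srwStep_walk (x : ℤ) (ε : ℕ → Bool) (s : ℕ) :
    srwStep (walkPath x ε s) (walkPath x ε (s+1)) = 1/2 := by
  rw [walkPath_succ, srwStep]
  cases h : ε s <;> simp
  intro h2
  exact absurd (by ring) h2

lemma prod_srwStep (x : ℤ) (ε : ℕ → Bool) (t : ℕ) :
    ∏ s ∈ Finset.range t, srwStep (walkPath x ε s) (walkPath x ε (s+1)) = 2⁻¹ ^ t := by
  have : ∀ s ∈ Finset.range t, srwStep (walkPath x ε s) (walkPath x ε (s+1)) = 2⁻¹ := by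
    intro s _
    rw [srwStep_walk]
    simp [one_div]
  rw [Finset.prod_congr rfl this, Finset.prod_const, Finset.card_range]

lemma walkPath_inj (x : ℤ) (t : ℕ) (ε ε' : Fin t → Bool)
    (h : ∀ s ≤ t, walkPath x (extb t ε) s = walkPath x (extb t ε') s) : ε = ε' := by
  funext i
  have h1 := h i (le_of_lt i.2)
  have h2 := h (i+1) i.2
  rw [walkPath_succ, walkPath_succ, h1] at h2
  have : (if extb t ε i then (1:ℤ) else -1) = (if extb t ε' i then 1 else -1) := by omega
  have hi : (i : ℕ) < t := i.2
  simp only [extb, dif_pos hi] at this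
  rcases hε : ε ⟨i, hi⟩ <;> rcases hε' : ε' ⟨i, hi⟩ <;>
    simp [hε, hε', Fin.eta] at this ⊢ <;> omega

lemma walkPath_congr (x : ℤ) (ε ε' : ℕ → Bool) (s : ℕ) (h : ∀ i < s, ε i = ε' i) :
    walkPath x ε s = walkPath x ε' s := by
  induction s with
  | zero => rfl
  | succ s ih =>
    rw [walkPath_succ, walkPath_succ, ih (fun i hi => h i (by omega)), h s (by omega)]

lemma walkPath_shift (x : ℤ) (ε : ℕ → Bool) (s : ℕ) :
    walkPath x ε (s+1) = walkPath (x + (if ε 0 then 1 else -1)) (fun i => ε (i+1)) s := by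
  induction s with
  | zero => rfl
  | succ s ih =>
    rw [walkPath_succ, ih, walkPath_succ]

noncomputable def Qfun (n : ℕ) (x : ℤ) (t : ℕ) : ℝ≥0∞ :=
  ∑ ε : Fin t → Bool,
    if (∀ s ≤ t, walkPath x (extb t ε) s ≠ 0 ∧ walkPath x (extb t ε) s ≠ (n:ℤ))
    then 2⁻¹^t else 0

lemma Qfun_zero (n : ℕ) (x : ℤ) :
    Qfun n x 0 = if x = 0 ∨ x = (n:ℤ) then 0 else 1 := by
  unfold Qfun
  rw [Fintype.sum_unique]
  have : (∀ s ≤ 0, walkPath x (extb 0 default) s ≠ 0 ∧ walkPath x (extb 0 default) s ≠ (n:ℤ))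
      ↔ (x ≠ 0 ∧ x ≠ (n:ℤ)) := by
    constructor
    · intro h; exact h 0 le_rfl
    · intro h s hs
      interval_cases s
      exact h
  split_ifs with hc hd hd
  · exact absurd (this.mp hc) (by tauto)
  · norm_num
  · rfl
  · exact absurd (this.mpr (by tauto)) hc

lemma extb_cons_zero (t : ℕ) (b : Bool) (ε : Fin t → Bool) :
    extb (t+1) (Fin.cons b ε) 0 = b := by
  simp [extb]

lemma extb_cons_shift (t : ℕ) (b : Bool) (ε : Fin t → Bool) (i : ℕ) :
    extb (t+1) (Fin.cons b ε) (i+1) = extb t ε i := by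
  unfold extb
  by_cases h : i < t
  · rw [dif_pos (by omega), dif_pos h]
    have : (⟨i+1, by omega⟩ : Fin (t+1)) = Fin.succ ⟨i, h⟩ := rfl
    rw [this, Fin.cons_succ]
  · rw [dif_neg (by omega), dif_neg h]

lemma Qfun_succ (n : ℕ) (x : ℤ) (t : ℕ) :
    Qfun n x (t+1) = if x = 0 ∨ x = (n:ℤ) then 0
      else 2⁻¹ * (Qfun n (x+1) t + Qfun n (x-1) t) := by
  have hdecomp : ∀ (b : Bool) (ε : Fin t → Bool),
      (∀ s ≤ t+1, walkPath x (extb (t+1) (Fin.cons b ε)) s ≠ 0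
          ∧ walkPath x (extb (t+1) (Fin.cons b ε)) s ≠ (n:ℤ))
      ↔ ((x ≠ 0 ∧ x ≠ (n:ℤ)) ∧ ∀ s ≤ t,
          walkPath (x + (if b then 1 else -1)) (extb t ε) s ≠ 0
            ∧ walkPath (x + (if b then 1 else -1)) (extb t ε) s ≠ (n:ℤ)) := by
    intro b ε
    have hshift : ∀ s, walkPath x (extb (t+1) (Fin.cons b ε)) (s+1)
        = walkPath (x + (if b then 1 else -1)) (extb t ε) s := by
      intro s
      rw [walkPath_shift, extb_cons_zero]
      exact walkPath_congr _ _ _ _ (fun i _ => extb_cons_shift t b ε i)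
    constructor
    · intro h
      refine ⟨h 0 (by omega), fun s hs => ?_⟩
      rw [← hshift s]
      exact h (s+1) (by omega)
    · rintro ⟨h0, h⟩ s hs
      match s with
      | 0 => exact h0
      | (s+1) => rw [hshift s]; exact h s (by omega)
  have hsum : Qfun n x (t+1) = ∑ b : Bool, ∑ ε : Fin t → Bool,
      (if (∀ s ≤ t+1, walkPath x (extb (t+1) (Fin.cons b ε)) s ≠ 0
          ∧ walkPath x (extb (t+1) (Fin.cons b ε)) s ≠ (n:ℤ)) then (2⁻¹:ℝ≥0∞)^(t+1) else 0) := by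
    unfold Qfun
    rw [← (Fin.consEquiv (fun _ : Fin (t+1) => Bool)).sum_comp
        (fun ε => if (∀ s ≤ t+1, walkPath x (extb (t+1) ε) s ≠ 0 ∧ walkPath x (extb (t+1) ε) s ≠ (n:ℤ)) then (2⁻¹:ℝ≥0∞)^(t+1) else 0),
      Fintype.sum_prod_type]
    rfl
  rw [hsum]
  by_cases hx : x = 0 ∨ x = (n:ℤ)
  · rw [if_pos hx]
    have : ∀ (b : Bool), ∑ ε : Fin t → Bool,
        (if (∀ s ≤ t+1, walkPath x (extb (t+1) (Fin.cons b ε)) s ≠ 0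
            ∧ walkPath x (extb (t+1) (Fin.cons b ε)) s ≠ (n:ℤ)) then (2⁻¹:ℝ≥0∞)^(t+1) else 0) = 0 := by
      intro b
      apply Finset.sum_eq_zero
      intro ε _
      exact if_neg (by simp only [hdecomp b ε]; tauto)
    rw [Fintype.sum_bool, this true, this false, add_zero]
  · rw [if_neg hx]
    push_neg at hx
    have hb : ∀ (b : Bool), ∑ ε : Fin t → Bool,
        (if (∀ s ≤ t+1, walkPath x (extb (t+1) (Fin.cons b ε)) s ≠ 0
            ∧ walkPath x (extb (t+1) (Fin.cons b ε)) s ≠ (n:ℤ)) then (2⁻¹:ℝ≥0∞)^(t+1) else 0)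
        = 2⁻¹ * Qfun n (x + (if b then 1 else -1)) t := by
      intro b
      unfold Qfun
      rw [Finset.mul_sum]
      apply Finset.sum_congr rfl
      intro ε _
      simp only [hdecomp b ε]
      by_cases hc : ∀ s ≤ t, walkPath (x + (if b then 1 else -1)) (extb t ε) s ≠ 0
          ∧ walkPath (x + (if b then 1 else -1)) (extb t ε) s ≠ (n:ℤ)
      · rw [if_pos ⟨hx, hc⟩, if_pos hc, pow_succ]
        ring
      · rw [if_neg (by tauto), if_neg hc, mul_zero]
    rw [Fintype.sum_bool, hb true, hb false, ← mul_add]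
    norm_num [sub_eq_add_neg]

lemma Qfun_eq_srwF (n : ℕ) (hn : 1 ≤ n) : ∀ (t : ℕ) (x : ℤ), 0 ≤ x → x ≤ (n:ℤ) →
    0 ≤ srwF n x t ∧ Qfun n x t = ENNReal.ofReal (srwF n x t) := by
  intro t
  induction t with
  | zero =>
    intro x hx0 hxn
    rw [Qfun_zero]
    by_cases h : x = 0 ∨ x = (n:ℤ)
    · rw [if_pos h]
      rcases h with h | h <;> subst h
      · rw [srwF_zero]; simp
      · rw [srwF_n n hn]; simp
    · push_neg at h
      rw [if_neg (by tauto), srwF_base n hn x (by omega) (by omega)]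
      simp
  | succ t ih =>
    intro x hx0 hxn
    rw [Qfun_succ]
    by_cases h : x = 0 ∨ x = (n:ℤ)
    · rw [if_pos h]
      rcases h with h | h <;> subst h
      · rw [srwF_zero]; simp
      · rw [srwF_n n hn]; simp
    · push_neg at h
      obtain ⟨hp, hq⟩ := ih (x-1) (by omega) (by omega)
      obtain ⟨hp', hq'⟩ := ih (x+1) (by omega) (by omega)
      rw [if_neg (by tauto), hq, hq', srwF_rec n hn x t]
      constructor
      · linarith
      · rw [add_comm (ENNReal.ofReal (srwF n (x+1) t)) (ENNReal.ofReal (srwF n (x-1) t)),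
          ← ENNReal.ofReal_add hp hp',
          ENNReal.ofReal_div_of_pos (by norm_num : (0:ℝ) < 2),
          show ENNReal.ofReal 2 = 2 by norm_num,
          ENNReal.div_eq_inv_mul]

open MeasureTheory in
lemma prob_eq_Qfun {Ω : Type*} [MeasurableSpace Ω] (P : ℤ → Measure Ω) (S : ℕ → Ω → ℤ)
    (hS : IsSRW P S) (n : ℕ) (x : ℤ) (t : ℕ) :
    P x {ω | ∀ s ≤ t, S s ω ∉ ({0, (n : ℤ)} : Set ℤ)} = Qfun n x t := by
  obtain ⟨hprob, hmeas, hcyl⟩ := hS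
  haveI := hprob x
  set E := {ω | ∀ s ≤ t, S s ω ∉ ({0, (n : ℤ)} : Set ℤ)} with hE
  have hEmeas : MeasurableSet E := by
    have : E = ⋂ (s : ℕ), ⋂ (_ : s ≤ t), (S s) ⁻¹' ({0, (n:ℤ)}ᶜ) := by
      ext ω; simp [hE, Set.mem_iInter]
    rw [this]
    exact MeasurableSet.iInter fun s => MeasurableSet.iInter fun _ => (hmeas s) trivial
  set A : (Fin t → Bool) → Set Ω := fun ε => {ω | ∀ s ≤ t, S s ω = walkPath x (extb t ε) s} with hA
  have hAmeas : ∀ ε, MeasurableSet (A ε) := by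
    intro ε
    have : A ε = ⋂ (s : ℕ), ⋂ (_ : s ≤ t), (S s) ⁻¹' {walkPath x (extb t ε) s} := by
      ext ω; simp [hA, Set.mem_iInter]
    rw [this]
    exact MeasurableSet.iInter fun s => MeasurableSet.iInter fun _ => (hmeas s) trivial
  have hAP : ∀ ε, P x (A ε) = 2⁻¹ ^ t := by
    intro ε
    have h1 := hcyl x t (walkPath x (extb t ε)) rfl
    rw [prod_srwStep] at h1
    exact h1
  have hdisj : Pairwise (Function.onFun Disjoint A) := by
    intro ε ε' hne
    have hd : ∀ ω, ω ∈ A ε → ω ∈ A ε' → False := fun ω hω hω' =>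
      hne (walkPath_inj x t ε ε' (fun s hs => (hω s hs).symm.trans (hω' s hs)))
    exact Set.disjoint_left.mpr fun {ω} hω hω' => hd ω hω hω'
  have hU : P x (⋃ ε, A ε) = 1 := by
    rw [measure_iUnion hdisj hAmeas, tsum_fintype,
      Finset.sum_congr rfl (fun ε _ => hAP ε), Finset.sum_const]
    have hcard : (Finset.univ : Finset (Fin t → Bool)).card = 2^t := by
      simp [Finset.card_univ]
    rw [hcard, nsmul_eq_mul]
    push_cast
    rw [← ENNReal.inv_pow, ENNReal.mul_inv_cancel (by positivity) (by simp)]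
  have hcompl : P x ((⋃ ε, A ε)ᶜ) = 0 := by
    have h1 := measure_compl (MeasurableSet.iUnion hAmeas) (measure_ne_top (P x) _)
    rw [hU, measure_univ] at h1
    simpa using h1
  have hsplit : P x E = ∑ ε : Fin t → Bool, P x (E ∩ A ε) := by
    have h0 := measure_inter_add_diff (μ := P x) E (MeasurableSet.iUnion hAmeas)
    have h2 : P x (E \ ⋃ ε, A ε) = 0 :=
      measure_mono_null (Set.diff_subset_compl E _) hcompl
    rw [h2, add_zero] at h0
    rw [← h0, Set.inter_iUnion, measure_iUnion
      (fun i j hij => ((hdisj hij).mono Set.inter_subset_right Set.inter_subset_right))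
      (fun ε => hEmeas.inter (hAmeas ε)), tsum_fintype]
  rw [hsplit]
  unfold Qfun
  apply Finset.sum_congr rfl
  intro ε _
  by_cases hg : ∀ s ≤ t, walkPath x (extb t ε) s ≠ 0 ∧ walkPath x (extb t ε) s ≠ (n:ℤ)
  · rw [if_pos hg]
    have hsub : A ε ⊆ E := by
      intro ω hω s hs
      have h1 : S s ω = walkPath x (extb t ε) s := hω s hs
      have h2 := hg s hs
      simp only [Set.mem_insert_iff, Set.mem_singleton_iff, h1]
      tauto
    rw [Set.inter_eq_self_of_subset_right hsub, hAP]
  · rw [if_neg hg]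
    push_neg at hg
    obtain ⟨s0, hs0, hbad⟩ := hg
    have : E ∩ A ε = ∅ := by
      rw [Set.eq_empty_iff_forall_notMem]
      rintro ω ⟨hωE, hωA⟩
      have h1 : S s0 ω = walkPath x (extb t ε) s0 := hωA s0 hs0
      have h2 := hωE s0 hs0
      simp only [Set.mem_insert_iff, Set.mem_singleton_iff, h1] at h2
      tauto
    rw [this, measure_empty]

end SRWAux

/-- for all `n ≥ 1`, `t ≥ 0` and `0 ≤ x ≤ n`, the probability
`h_n(x,t)` that the simple random walk started at `x` does not hit `{0, n}`
up to time `t` equals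
`(2/n) Σ_{j=1}^{⌊n/2⌋} cos^t(π(2j-1)/n) cot(π(2j-1)/(2n)) sin(πx(2j-1)/n)`. -/
theorem srw_not_hitting_probability_formula
    {Ω : Type*} [MeasurableSpace Ω] (P : ℤ → Measure Ω) (S : ℕ → Ω → ℤ)
    (hS : IsSRW P S) (n : ℕ) (hn : 1 ≤ n) (t : ℕ) (x : ℤ)
    (hx0 : 0 ≤ x) (hxn : x ≤ (n : ℤ)) :
    P x {ω | ∀ s ≤ t, S s ω ∉ ({0, (n : ℤ)} : Set ℤ)}
      = ENNReal.ofReal ((2 / (n : ℝ)) * ∑ j ∈ Finset.Icc 1 (n / 2),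
          Real.cos (Real.pi * (2 * (j : ℝ) - 1) / n) ^ t
            * Real.cot (Real.pi * (2 * (j : ℝ) - 1) / (2 * n))
            * Real.sin (Real.pi * (x : ℝ) * (2 * (j : ℝ) - 1) / n)) := by
  have h1 := prob_eq_Qfun P S hS n x t
  have h2 := (Qfun_eq_srwF n hn t x hx0 hxn).2
  rw [h1, h2]
  rfl
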